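/- Let C be a category with finite coproducts and X an object of C. Let F : ℕ ⥤ Grp be the functor sending r to the automorphism group Aut(T_r) and whose transition maps are the stabilization homomorphisms, and let G be the colimit of F in the category of groups. Then the commutator subgroup ⁅G,G⁆ of G is perfect, i.e. ⁅⁅G,G⁆,⁅G,G⁆⁆ = ⁅G,G⁆. (This is the paper's proposition that for every Lawvere theory T the commutator subgroup of the stable automorphism group colim_r Aut(T_r) is perfect.) -/

import Mathlib

open CategoryTheory CategoryTheory.Limits

universe u v

variable {C : Type u} [Category.{v} C]

/-- `T X r` is the coproduct of `r` copies of `X`, indexed by `Fin r`;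
it models the free model of rank `r` of a Lawvere theory with `X = T_1`. -/
noncomputable def T [HasFiniteCoproducts C] (X : C) (r : ℕ) : C :=
  ∐ (fun _ : Fin r => X)

/-- The canonical isomorphism `T_r ⊔ T_1 ≅ T_{r+1}`. -/
noncomputable def stabIso [HasFiniteCoproducts C] (X : C) (r : ℕ) :
    T X r ⨿ X ≅ T X (r + 1) :=
  (coprod.braiding (T X r) X).trans <|
    IsColimit.coconePointUniqueUpToIso
      (extendCofanIsColimit (fun _ : Fin (r + 1) => X)
        (coproductIsCoproduct (fun _ : Fin r => X))
        (coprodIsCoprod X (T X r)))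
      (coproductIsCoproduct (fun _ : Fin (r + 1) => X))

/-- The stabilization homomorphism `Aut (T_r) →* Aut (T_{r+1})`, sending an
automorphism `u` of `T_r` to the automorphism of `T_{r+1}` obtained by
transporting `u ⊔ 𝟙_X` along the canonical isomorphism `T_r ⊔ T_1 ≅ T_{r+1}`. -/
noncomputable def stabHom [HasFiniteCoproducts C] (X : C) (r : ℕ) :
    Aut (T X r) →* Aut (T X (r + 1)) :=
  ((stabIso X r).conjAut.toMonoidHom).comp ((coprod.functor.flip.obj X).mapAut (X := T X r))

/-- The functor `ℕ ⥤ Grp` sending `r` to `Aut (T_r)`, whose transition maps are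
the stabilization homomorphisms. -/
noncomputable def autFunctor [HasFiniteCoproducts C] (X : C) : ℕ ⥤ GrpCat.{v} :=
  Functor.ofSequence (fun r => GrpCat.ofHom (stabHom X r))

/-! ### Auxiliary material -/

open scoped commutatorElement

section GroupAux

/-- The key group-theoretic computation: if suitable conjugates commute, then a
commutator can be rewritten as a commutator of commutators. -/
private lemma key_comm {G : Type*} [Group G] (x y s2 s3 : G)
    (c1 : Commute (s2 * x⁻¹ * s2⁻¹) y)
    (c2 : Commute (s2 * x⁻¹ * s2⁻¹) (s3 * y⁻¹ * s3⁻¹))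
    (c3 : Commute x (s3 * y⁻¹ * s3⁻¹)) :
    ⁅x, y⁆ = ⁅⁅x, s2⁆, ⁅y, s3⁆⁆ := by
  have hA : ⁅x, s2⁆ = x * (s2 * x⁻¹ * s2⁻¹) := by group
  have hB : ⁅y, s3⁆ = y * (s3 * y⁻¹ * s3⁻¹) := by group
  rw [hA, hB]
  have t1 : ⁅x * (s2 * x⁻¹ * s2⁻¹), y * (s3 * y⁻¹ * s3⁻¹)⁆
      = x * ((s2 * x⁻¹ * s2⁻¹) * y) * ((s3 * y⁻¹ * s3⁻¹) * (s2 * x⁻¹ * s2⁻¹)⁻¹)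
          * x⁻¹ * (s3 * y⁻¹ * s3⁻¹)⁻¹ * y⁻¹ := by group
  rw [t1, c1.eq, ← c2.inv_left.eq]
  have t2 : x * (y * (s2 * x⁻¹ * s2⁻¹)) * ((s2 * x⁻¹ * s2⁻¹)⁻¹ * (s3 * y⁻¹ * s3⁻¹))
          * x⁻¹ * (s3 * y⁻¹ * s3⁻¹)⁻¹ * y⁻¹
      = x * y * (((s3 * y⁻¹ * s3⁻¹) * x⁻¹) * (s3 * y⁻¹ * s3⁻¹)⁻¹) * y⁻¹ := by group
  rw [t2, ← c3.inv_left.eq]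
  group

private lemma commute_conj_eq {G : Type*} [Group G] {a b : G} (h : Commute a b) :
    a * b * a⁻¹ = b := by
  rw [h.eq]; group

end GroupAux

section CatAux

variable [HasBinaryCoproducts C]

private lemma aut_mul_hom {Z : C} (f g : Aut Z) : (f * g).hom = g.hom ≫ f.hom := rfl

private lemma aut_inv_hom {Z : C} (f : Aut Z) : (f⁻¹).hom = f.inv := rfl

private lemma conj_eq_iff {Z : C} (s f g : Aut Z) :
    s * f * s⁻¹ = g ↔ f.hom ≫ s.hom = s.hom ≫ g.hom := by
  constructor
  · rintro rfl; simp [aut_mul_hom, aut_inv_hom]; exact (s.hom_inv_id_assoc _).symm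
  · intro h
    apply Aut.ext
    simp only [aut_mul_hom, aut_inv_hom]
    rw [h]
    exact s.inv_hom_id_assoc _

private lemma conjAut_mapIso {A B A' B' : C} (e1 : A ≅ A') (e2 : B ≅ B')
    (u : Aut A) (v : Aut B) :
    (coprod.mapIso e1 e2).conjAut (coprod.mapIso u v)
      = coprod.mapIso (e1.conjAut u) (e2.conjAut v) := by
  apply Aut.ext
  show (coprod.mapIso e1 e2).inv ≫ coprod.map u.hom v.hom ≫ (coprod.mapIso e1 e2).hom
    = coprod.map (e1.inv ≫ u.hom ≫ e1.hom) (e2.inv ≫ v.hom ≫ e2.hom)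
  simp [Iso.conjAut_hom, Iso.conj_apply, coprod.mapIso, coprod.map_map]

private lemma conjAut_refl_left {A : C} (v : Aut A) : (Iso.refl A).conjAut v = v := by
  apply Aut.ext
  simp [Iso.conjAut_hom, Iso.conj_apply]

private lemma conjAut_one {A B : C} (e : A ≅ B) : e.conjAut (Iso.refl A) = Iso.refl B :=
  map_one e.conjAut

private lemma conjAut_assoc_symm {A : C} (u : Aut A) (B Z : C) :
    ((coprod.associator A B Z).symm).conjAut (coprod.mapIso u (Iso.refl (B ⨿ Z)))
      = coprod.mapIso (coprod.mapIso u (Iso.refl B)) (Iso.refl Z) := by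
  apply Aut.ext
  show (coprod.associator A B Z).hom ≫ coprod.map u.hom (𝟙 (B ⨿ Z)) ≫ (coprod.associator A B Z).inv
    = coprod.map (coprod.map u.hom (𝟙 B)) (𝟙 Z)
  rw [← Category.assoc, Iso.comp_inv_eq]
  simpa using (coprod.associator_naturality u.hom (𝟙 B) (𝟙 Z)).symm

variable (A : C)

/-- The automorphism `u ⊔ 𝟙 ⊔ 𝟙` of `A ⊔ (A ⊔ A)`. -/
private noncomputable def bl1 (u : Aut A) : Aut (A ⨿ (A ⨿ A)) :=
  coprod.mapIso u (Iso.refl _)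

/-- The automorphism `𝟙 ⊔ u ⊔ 𝟙` of `A ⊔ (A ⊔ A)`. -/
private noncomputable def bl2 (u : Aut A) : Aut (A ⨿ (A ⨿ A)) :=
  coprod.mapIso (Iso.refl A) (coprod.mapIso u (Iso.refl A))

/-- The automorphism `𝟙 ⊔ 𝟙 ⊔ u` of `A ⊔ (A ⊔ A)`. -/
private noncomputable def bl3 (u : Aut A) : Aut (A ⨿ (A ⨿ A)) :=
  coprod.mapIso (Iso.refl A) (coprod.mapIso (Iso.refl A) u)

/-- Swapping the first two summands of `A ⊔ (A ⊔ A)`. -/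
private noncomputable def sw12 : Aut (A ⨿ (A ⨿ A)) :=
  (coprod.associator A A A).symm ≪≫ coprod.mapIso (coprod.braiding A A) (Iso.refl A)
    ≪≫ coprod.associator A A A

/-- Swapping the last two summands of `A ⊔ (A ⊔ A)`. -/
private noncomputable def sw23 : Aut (A ⨿ (A ⨿ A)) :=
  coprod.mapIso (Iso.refl A) (coprod.braiding A A)

variable {A}

private lemma F1 (u : Aut A) : sw12 A * bl1 A u * (sw12 A)⁻¹ = bl2 A u := by
  rw [conj_eq_iff]
  simp [sw12, bl1, bl2, coprod.mapIso]
  simp only [coprod.inl_desc_assoc, coprod.inr_desc_assoc, coprod.inl_desc, coprod.inr_desc, Category.assoc]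

private lemma F2 (u : Aut A) : sw23 A * bl2 A u * (sw23 A)⁻¹ = bl3 A u := by
  rw [conj_eq_iff]
  simp [sw23, bl2, bl3, coprod.mapIso, coprod.map_map]

private lemma F3 (u : Aut A) : Commute (sw23 A) (bl1 A u) := by
  apply Aut.ext
  rw [aut_mul_hom, aut_mul_hom]
  simp [sw23, bl1, coprod.mapIso, coprod.map_map]

private lemma F4a (u v : Aut A) : Commute (bl2 A u) (bl1 A v) := by
  apply Aut.ext
  rw [aut_mul_hom, aut_mul_hom]
  simp [bl2, bl1, coprod.mapIso, coprod.map_map]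

private lemma F4b (u v : Aut A) : Commute (bl2 A u) (bl3 A v) := by
  apply Aut.ext
  rw [aut_mul_hom, aut_mul_hom]
  simp [bl2, bl3, coprod.mapIso, coprod.map_map]

private lemma F4c (u v : Aut A) : Commute (bl1 A u) (bl3 A v) := by
  apply Aut.ext
  rw [aut_mul_hom, aut_mul_hom]
  simp [bl1, bl3, coprod.mapIso, coprod.map_map]

private lemma bl1_inv (u : Aut A) : (bl1 A u)⁻¹ = bl1 A u⁻¹ := by
  apply Aut.ext
  rfl

private lemma F5 (u : Aut A) :
    (sw23 A * sw12 A * (sw23 A)⁻¹) * bl1 A u * (sw23 A * sw12 A * (sw23 A)⁻¹)⁻¹ = bl3 A u := by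
  have h0 : (sw23 A)⁻¹ * bl1 A u * ((sw23 A)⁻¹)⁻¹ = bl1 A u :=
    commute_conj_eq (F3 u).inv_left
  have h1 : (sw23 A * sw12 A * (sw23 A)⁻¹) * bl1 A u * (sw23 A * sw12 A * (sw23 A)⁻¹)⁻¹
      = sw23 A * (sw12 A * ((sw23 A)⁻¹ * bl1 A u * ((sw23 A)⁻¹)⁻¹) * (sw12 A)⁻¹) * (sw23 A)⁻¹ := by
    group
  rw [h1, h0, F1, F2]

end CatAux

section ColimAux

variable [HasFiniteCoproducts C] (X : C)

/-- The coproduct of one copy of `X` is isomorphic to `X`. -/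
private noncomputable def oneIso : T X 1 ≅ X where
  hom := Sigma.desc fun _ => 𝟙 X
  inv := Sigma.ι (fun _ : Fin 1 => X) 0
  hom_inv_id := by
    apply Sigma.hom_ext
    intro i
    obtain rfl : i = 0 := Subsingleton.elim i 0
    simp [T]
  inv_hom_id := Sigma.ι_desc _ _

private lemma stab_val (r : ℕ) (u : Aut (T X r)) :
    stabHom X r u = (stabIso X r).conjAut (coprod.mapIso u (Iso.refl X)) := by
  apply Aut.ext
  rfl

/-- The iterated stabilization isomorphism `T_r ⊔ T_{k+1} ≅ T_{r+k+1}`. -/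
private noncomputable def eIso : ∀ (r k : ℕ), T X r ⨿ T X (k + 1) ≅ T X (r + (k + 1))
  | r, 0 => coprod.mapIso (Iso.refl _) (oneIso X) ≪≫ stabIso X r
  | r, (k + 1) =>
      coprod.mapIso (Iso.refl _) (stabIso X (k + 1)).symm
        ≪≫ (coprod.associator _ _ _).symm
        ≪≫ coprod.mapIso (eIso r k) (Iso.refl X)
        ≪≫ stabIso X (r + (k + 1))

variable (c : Cocone (autFunctor X))

private lemma ι_succ (n : ℕ) (v : Aut (T X n)) :
    c.ι.app (n + 1) (stabHom X n v) = c.ι.app n v := by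
  have hw := c.w (homOfLE (Nat.le_add_right n 1))
  have h2 : (autFunctor X).map (homOfLE (Nat.le_add_right n 1)) = GrpCat.ofHom (stabHom X n) :=
    Functor.ofSequence_map_homOfLE_succ _ n
  conv_rhs => rw [← hw]
  rw [h2]
  rfl

private lemma ι_eIso (r : ℕ) : ∀ (k : ℕ) (u : Aut (T X r)),
    c.ι.app (r + (k + 1))
      ((eIso X r k).conjAut (coprod.mapIso u (Iso.refl (T X (k + 1))))) = c.ι.app r u := by
  intro k
  induction k with
  | zero =>
      intro u
      have h1 : (eIso X r 0).conjAut (coprod.mapIso u (Iso.refl (T X 1)))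
          = stabHom X r u := by
        apply Aut.ext
        show (coprod.mapIso (Iso.refl _) (oneIso X) ≪≫ stabIso X r).inv ≫ coprod.map u.hom (𝟙 _)
            ≫ (coprod.mapIso (Iso.refl _) (oneIso X) ≪≫ stabIso X r).hom
          = (stabIso X r).inv ≫ coprod.map u.hom (𝟙 X) ≫ (stabIso X r).hom
        generalize u.hom = f
        simp [coprod.mapIso, coprod.map_map_assoc]
      rw [h1, ι_succ]
  | succ k ih =>
      intro u
      have h1 : (eIso X r (k + 1)).conjAut (coprod.mapIso u (Iso.refl (T X (k + 2))))
          = stabHom X (r + (k + 1))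
              ((eIso X r k).conjAut (coprod.mapIso u (Iso.refl (T X (k + 1))))) := by
        apply Aut.ext
        show (coprod.mapIso (Iso.refl _) (stabIso X (k + 1)).symm
            ≪≫ (coprod.associator _ _ _).symm
            ≪≫ coprod.mapIso (eIso X r k) (Iso.refl X)
            ≪≫ stabIso X (r + (k + 1))).inv ≫ coprod.map u.hom (𝟙 _) ≫
            (coprod.mapIso (Iso.refl _) (stabIso X (k + 1)).symm
            ≪≫ (coprod.associator _ _ _).symm
            ≪≫ coprod.mapIso (eIso X r k) (Iso.refl X)
            ≪≫ stabIso X (r + (k + 1))).hom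
          = (stabIso X (r + (k + 1))).inv ≫ coprod.map ((eIso X r k).inv ≫ coprod.map u.hom (𝟙 _)
              ≫ (eIso X r k).hom) (𝟙 X) ≫ (stabIso X (r + (k + 1))).hom
        generalize u.hom = f
        have hA : (coprod.associator (T X r) (T X (k + 1)) X).hom ≫ coprod.map f (𝟙 _)
            ≫ (coprod.associator _ _ _).inv = coprod.map (coprod.map f (𝟙 _)) (𝟙 X) := by
          rw [← Category.assoc, Iso.comp_inv_eq]
          simpa using (coprod.associator_naturality f (𝟙 (T X (k + 1))) (𝟙 X)).symm
        simp only [Iso.trans_inv, Iso.trans_hom, coprod.mapIso, Iso.symm_hom, Iso.symm_inv,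
          Iso.refl_hom, Iso.refl_inv, Category.assoc, coprod.map_map_assoc, Category.id_comp,
          Category.comp_id, Iso.hom_inv_id, reassoc_of% hA]
      rw [h1]
      show c.ι.app ((r + (k + 1)) + 1)
        (stabHom X (r + (k + 1)) ((eIso X r k).conjAut (coprod.mapIso u (Iso.refl (T X (k + 1)))))) = _
      rw [ι_succ, ih]

private lemma ι_mono {r s : ℕ} (hrs : r ≤ s) (u : Aut (T X r)) :
    c.ι.app s ((autFunctor X).map (homOfLE hrs) u) = c.ι.app r u :=
  ConcreteCategory.congr_hom (c.w (homOfLE hrs)) u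

private lemma jointly_surj (hc : IsColimit c) (g : ↥c.pt) :
    ∃ (r : ℕ) (u : Aut (T X r)), c.ι.app r u = g := by
  let ιm : ∀ r : ℕ, Aut (T X r) →* ↥c.pt := fun r => (c.ι.app r).hom
  let H : Subgroup ↥c.pt := ⨆ r, (ιm r).range
  have hrange : ∀ r, (ιm r).range ≤ H := fun r => le_iSup (fun r => (ιm r).range) r
  let d : Cocone (autFunctor X) :=
    { pt := GrpCat.of H
      ι :=
        { app := fun r => GrpCat.ofHom ((ιm r).codRestrict H
            (fun u => hrange r ⟨u, rfl⟩))
          naturality := fun r s f => by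
            ext x
            exact Subtype.ext (ConcreteCategory.congr_hom (c.w f) x) } }
  have hid : hc.desc d ≫ GrpCat.ofHom H.subtype = 𝟙 c.pt := by
    refine hc.hom_ext fun r => ?_
    rw [← Category.assoc, hc.fac]
    ext x
    rfl
  have hmem : g ∈ H := by
    have h3 : (GrpCat.ofHom H.subtype) (hc.desc d g) = g := ConcreteCategory.congr_hom hid g
    rw [← h3]
    exact (show ↥H from hc.desc d g).2
  have hdir : Directed (· ≤ ·) fun r => (ιm r).range := by
    intro r s
    refine ⟨max r s, ?_, ?_⟩
    · rintro x ⟨u, rfl⟩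
      exact ⟨(autFunctor X).map (homOfLE (le_max_left r s)) u, ι_mono X c _ u⟩
    · rintro x ⟨u, rfl⟩
      exact ⟨(autFunctor X).map (homOfLE (le_max_right r s)) u, ι_mono X c _ u⟩
  rw [Subgroup.mem_iSup_of_directed hdir] at hmem
  obtain ⟨r, u, hu⟩ := hmem
  exact ⟨r, u, hu⟩

end ColimAux

set_option maxHeartbeats 1000000 in
/-- For every Lawvere theory `T`, the commutator subgroup of the stable
automorphism group `G = colim_r Aut (T_r)` (the colimit in the category of
groups of the functor `r ↦ Aut (T_r)` with the stabilization homomorphisms as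
transition maps) is perfect: `⁅⁅G,G⁆,⁅G,G⁆⁆ = ⁅G,G⁆`. -/
theorem commutator_stable_automorphism_group_perfect
    [HasFiniteCoproducts C] (X : C)
    (c : Cocone (autFunctor X)) (hc : IsColimit c) :
    ⁅commutator ↥c.pt, commutator ↥c.pt⁆ = commutator ↥c.pt := by
  apply le_antisymm
  · exact Subgroup.commutator_mono le_top le_top
  · conv_lhs => rw [commutator_eq_closure]
    rw [Subgroup.closure_le]
    rintro z ⟨g, h, rfl⟩
    -- find stages for g and h
    obtain ⟨r1, u1, hu1⟩ := jointly_surj X c hc g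
    obtain ⟨r2, u2, hu2⟩ := jointly_surj X c hc h
    set m := max r1 r2 with hm
    have hle1 : r1 ≤ m + 1 := le_trans (le_max_left _ _) (Nat.le_succ m)
    have hle2 : r2 ≤ m + 1 := le_trans (le_max_right _ _) (Nat.le_succ m)
    set A := T X (m + 1) with hA
    let a' : Aut A := (autFunctor X).map (homOfLE hle1) u1
    let b' : Aut A := (autFunctor X).map (homOfLE hle2) u2
    have ha' : c.ι.app (m + 1) a' = g := by
      rw [← hu1]; exact ι_mono X c hle1 u1
    have hb' : c.ι.app (m + 1) b' = h := by
      rw [← hu2]; exact ι_mono X c hle2 u2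
    -- the comparison isomorphism with `T X (3m+3)`
    let E : (A ⨿ (A ⨿ A)) ≅ T X ((m + 1) + (m + 1 + m + 1)) :=
      coprod.mapIso (Iso.refl A) (eIso X (m + 1) m) ≪≫ eIso X (m + 1) (m + 1 + m)
    let j : Aut (A ⨿ (A ⨿ A)) →* ↥c.pt :=
      MonoidHom.comp (c.ι.app ((m + 1) + (m + 1 + m + 1))).hom E.conjAut.toMonoidHom
    have hj1 : ∀ v : Aut A, j (bl1 A v) = c.ι.app (m + 1) v := by
      intro v
      show c.ι.app _ (E.conjAut (bl1 A v)) = _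
      have h1 : E.conjAut (bl1 A v)
          = (eIso X (m + 1) (m + 1 + m)).conjAut
              (coprod.mapIso v (Iso.refl (T X (m + 1 + (m + 1))))) := by
        show ((coprod.mapIso (Iso.refl A) (eIso X (m + 1) m)
            ≪≫ eIso X (m + 1) (m + 1 + m))).conjAut _ = _
        rw [Iso.trans_conjAut]
        have hinner : (coprod.mapIso (Iso.refl A) (eIso X (m + 1) m)).conjAut (bl1 A v)
            = coprod.mapIso v (Iso.refl (T X (m + 1 + (m + 1)))) := by
          rw [show bl1 A v = coprod.mapIso v (Iso.refl (A ⨿ A)) from rfl]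
          apply Aut.ext
          show (coprod.mapIso (Iso.refl A) (eIso X (m + 1) m)).inv ≫ coprod.map v.hom (𝟙 _)
            ≫ (coprod.mapIso (Iso.refl A) (eIso X (m + 1) m)).hom = coprod.map v.hom (𝟙 _)
          generalize v.hom = f
          simp [coprod.mapIso, coprod.map_map_assoc, coprod.map_map]
        rw [hinner]
      rw [h1]
      exact ι_eIso X c (m + 1) (m + 1 + m) v
    have hx : j (bl1 A a') = g := by rw [hj1, ha']
    have hy : j (bl1 A b') = h := by rw [hj1, hb']
    set s2 : ↥c.pt := j (sw12 A) with hs2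
    set s3 : ↥c.pt := j (sw23 A * sw12 A * (sw23 A)⁻¹) with hs3
    have e2 : s2 * g⁻¹ * s2⁻¹ = j (bl2 A a'⁻¹) := by
      rw [← hx, ← map_inv, bl1_inv, ← map_mul, ← map_inv, ← map_mul, F1]
    have e3 : s3 * h⁻¹ * s3⁻¹ = j (bl3 A b'⁻¹) := by
      rw [← hy, ← map_inv, bl1_inv, ← map_mul, ← map_inv, ← map_mul, F5]
    have c1 : Commute (s2 * g⁻¹ * s2⁻¹) h := by
      rw [e2, ← hy]; exact (F4a a'⁻¹ b').map j
    have c2 : Commute (s2 * g⁻¹ * s2⁻¹) (s3 * h⁻¹ * s3⁻¹) := by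
      rw [e2, e3]; exact (F4b a'⁻¹ b'⁻¹).map j
    have c3 : Commute g (s3 * h⁻¹ * s3⁻¹) := by
      rw [← hx, e3]; exact (F4c a' b'⁻¹).map j
    have hkey : ⁅g, h⁆ = ⁅⁅g, s2⁆, ⁅h, s3⁆⁆ := key_comm g h s2 s3 c1 c2 c3
    rw [SetLike.mem_coe, hkey, commutator_def]
    exact Subgroup.commutator_mem_commutator
      (Subgroup.commutator_mem_commutator (Subgroup.mem_top g) (Subgroup.mem_top s2))
      (Subgroup.commutator_mem_commutator (Subgroup.mem_top h) (Subgroup.mem_top s3))
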